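/- For all n ∈ ℕ and all even k with 2 ≤ k ≤ n-1: ∑_{s ≥ 0, n-2s ≥ k} B{n, n-2s} · (n-2s-1)² · A[n-2s-2, k-2] = π^(n-k)/(n-k)!, where B{n,m} := (1/((m-1)!(n-m)!))∫₀^π (sin x)^(m-1) x^(n-m) dx for 1 ≤ m ≤ n, B{n,0} := π^n/n!, and A[m,j] := [x^j]Q_m(x) for even j ≥ 0 with Q_m(x) := ∏_{i ∈ {1,…,m-1}, i ≢ m mod 2}(1+i²x²), A[m,j] := 0 for j < 0 or j > m. -/

import Mathlib

open Real Polynomial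

/-- The polynomial `Q_n(x) = ∏_{j ∈ {1,…,n-1}, j ≢ n (mod 2)} (1 + j² x²)`. -/
noncomputable def Q (n : ℕ) : Polynomial ℝ :=
  ∏ j ∈ (Finset.Icc 1 (n - 1)).filter (fun j => j % 2 ≠ n % 2),
    (1 + Polynomial.C ((j : ℝ) ^ 2) * Polynomial.X ^ 2)

/-- `A[n,k] := [x^k] Q_n(x)` for natural `k`. -/
noncomputable def A (n k : ℕ) : ℝ := (Q n).coeff k

/-- The normalized sine-moment integral `B{n,k}` from the paper, with
`B{n,0} := π^n/n!` and `B{n,k} := 0` for `k > n`. -/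
noncomputable def B (n k : ℕ) : ℝ :=
  if k = 0 then π ^ n / (n.factorial : ℝ)
  else if n < k then 0
  else (1 / (((k - 1).factorial : ℝ) * ((n - k).factorial : ℝ))) *
    ∫ x in (0:ℝ)..π, Real.sin x ^ (k - 1) * x ^ (n - k)

open MeasureTheory intervalIntegral

noncomputable def Ii (a b : ℕ) : ℝ := ∫ x in (0:ℝ)..π, Real.sin x ^ a * x ^ b

lemma contI (a b : ℕ) : Continuous fun x:ℝ => Real.sin x ^ a * x ^ b := by continuity

lemma intI (a b : ℕ) : IntervalIntegrable (fun x:ℝ => Real.sin x ^ a * x ^ b) volume 0 π :=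
  (contI a b).intervalIntegrable _ _

lemma Irec2 (c d : ℕ) : ((c:ℝ)+2)^2 * Ii (c+2) (d+2)
    = ((c:ℝ)+2)*((c:ℝ)+1) * Ii c (d+2) - ((d:ℝ)+2)*((d:ℝ)+1) * Ii (c+2) d := by
  have key : ∫ x in (0:ℝ)..π,
      (((c:ℝ)+2)^2 * (Real.sin x ^ (c+2) * x ^ (d+2))
        - ((c:ℝ)+2)*((c:ℝ)+1) * (Real.sin x ^ c * x ^ (d+2))
        + ((d:ℝ)+2)*((d:ℝ)+1) * (Real.sin x ^ (c+2) * x ^ d)) = 0 := by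
    have h := intervalIntegral.integral_eq_sub_of_hasDerivAt
      (f := fun x => -((c:ℝ)+2) * (Real.sin x ^ (c+1) * Real.cos x * x^(d+2))
          + ((d:ℝ)+2) * (Real.sin x ^ (c+2) * x^(d+1)))
      (f' := fun x => ((c:ℝ)+2)^2 * (Real.sin x ^ (c+2) * x ^ (d+2))
        - ((c:ℝ)+2)*((c:ℝ)+1) * (Real.sin x ^ c * x ^ (d+2))
        + ((d:ℝ)+2)*((d:ℝ)+1) * (Real.sin x ^ (c+2) * x ^ d))
      (a := 0) (b := π) ?_ ?_
    · rw [h]; simp [Real.sin_pi]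
    · intro x _
      have hs := Real.hasDerivAt_sin x
      have hc := Real.hasDerivAt_cos x
      have hp1 : HasDerivAt (fun y => Real.sin y ^ (c+1))
          (((c:ℝ)+1) * Real.sin x ^ c * Real.cos x) x := by
        simpa using hs.fun_pow (c+1)
      have hp2 : HasDerivAt (fun y => Real.sin y ^ (c+2))
          (((c:ℝ)+2) * Real.sin x ^ (c+1) * Real.cos x) x := by
        simpa using hs.fun_pow (c+2)
      have hx1 : HasDerivAt (fun y:ℝ => y^(d+2)) (((d:ℝ)+2) * x^(d+1)) x := by
        simpa using hasDerivAt_pow (d+2) x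
      have hx2 : HasDerivAt (fun y:ℝ => y^(d+1)) (((d:ℝ)+1) * x^d) x := by
        simpa using hasDerivAt_pow (d+1) x
      have H1 := ((hp1.fun_mul hc).fun_mul hx1)
      have H2 := (hp2.fun_mul hx2)
      have := (H1.const_mul (-((c:ℝ)+2))).fun_add (H2.const_mul ((d:ℝ)+2))
      convert this using 1
      have hcs : Real.cos x ^ 2 = 1 - Real.sin x ^ 2 := Real.cos_sq' x
      linear_combination (((c:ℝ)+2)*((c:ℝ)+1)* Real.sin x ^ c * x^(d+2)) * hcs
    · exact (((intI _ _).const_mul _).sub ((intI _ _).const_mul _)).add ((intI _ _).const_mul _)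
  rw [intervalIntegral.integral_add (((intI _ _).const_mul _).sub ((intI _ _).const_mul _))
        ((intI _ _).const_mul _),
      intervalIntegral.integral_sub ((intI _ _).const_mul _) ((intI _ _).const_mul _),
      intervalIntegral.integral_const_mul, intervalIntegral.integral_const_mul,
      intervalIntegral.integral_const_mul] at key
  have e1 : Ii (c+2) (d+2) = ∫ x in (0:ℝ)..π, Real.sin x ^ (c+2) * x ^ (d+2) := rfl
  have e2 : Ii c (d+2) = ∫ x in (0:ℝ)..π, Real.sin x ^ c * x ^ (d+2) := rfl
  have e3 : Ii (c+2) d = ∫ x in (0:ℝ)..π, Real.sin x ^ (c+2) * x ^ d := rfl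
  rw [← e1, ← e2, ← e3] at key
  linarith

lemma Irec0 (c : ℕ) : ((c:ℝ)+2)^2 * Ii (c+2) 0 = ((c:ℝ)+2)*((c:ℝ)+1) * Ii c 0 := by
  have key : ∫ x in (0:ℝ)..π,
      (((c:ℝ)+2)^2 * (Real.sin x ^ (c+2) * x ^ 0)
        - ((c:ℝ)+2)*((c:ℝ)+1) * (Real.sin x ^ c * x ^ 0)) = 0 := by
    have h := intervalIntegral.integral_eq_sub_of_hasDerivAt
      (f := fun x => -((c:ℝ)+2) * (Real.sin x ^ (c+1) * Real.cos x))
      (f' := fun x => ((c:ℝ)+2)^2 * (Real.sin x ^ (c+2) * x ^ 0)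
        - ((c:ℝ)+2)*((c:ℝ)+1) * (Real.sin x ^ c * x ^ 0))
      (a := 0) (b := π) ?_ ?_
    · rw [h]; simp [Real.sin_pi]
    · intro x _
      have hs := Real.hasDerivAt_sin x
      have hc := Real.hasDerivAt_cos x
      have hp1 : HasDerivAt (fun y => Real.sin y ^ (c+1))
          (((c:ℝ)+1) * Real.sin x ^ c * Real.cos x) x := by
        simpa using hs.fun_pow (c+1)
      have := (hp1.fun_mul hc).const_mul (-((c:ℝ)+2))
      refine this.congr_deriv (Eq.symm ?_)
      have hcs : Real.cos x ^ 2 = 1 - Real.sin x ^ 2 := Real.cos_sq' x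
      linear_combination (((c:ℝ)+2)*((c:ℝ)+1)* Real.sin x ^ c) * hcs
    · exact ((intI _ _).const_mul _).sub ((intI _ _).const_mul _)
  rw [intervalIntegral.integral_sub ((intI _ _).const_mul _) ((intI _ _).const_mul _),
      intervalIntegral.integral_const_mul, intervalIntegral.integral_const_mul] at key
  have e1 : Ii (c+2) 0 = ∫ x in (0:ℝ)..π, Real.sin x ^ (c+2) * x ^ 0 := rfl
  have e2 : Ii c 0 = ∫ x in (0:ℝ)..π, Real.sin x ^ c * x ^ 0 := rfl
  rw [← e1, ← e2] at key
  linarith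

lemma Irec1 (c : ℕ) : ((c:ℝ)+2)^2 * Ii (c+2) 1 = ((c:ℝ)+2)*((c:ℝ)+1) * Ii c 1 := by
  have key : ∫ x in (0:ℝ)..π,
      (((c:ℝ)+2)^2 * (Real.sin x ^ (c+2) * x ^ 1)
        - ((c:ℝ)+2)*((c:ℝ)+1) * (Real.sin x ^ c * x ^ 1)) = 0 := by
    have h := intervalIntegral.integral_eq_sub_of_hasDerivAt
      (f := fun x => -((c:ℝ)+2) * (Real.sin x ^ (c+1) * Real.cos x * x) + Real.sin x ^ (c+2))
      (f' := fun x => ((c:ℝ)+2)^2 * (Real.sin x ^ (c+2) * x ^ 1)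
        - ((c:ℝ)+2)*((c:ℝ)+1) * (Real.sin x ^ c * x ^ 1))
      (a := 0) (b := π) ?_ ?_
    · rw [h]; simp [Real.sin_pi]
    · intro x _
      have hs := Real.hasDerivAt_sin x
      have hc := Real.hasDerivAt_cos x
      have hp1 : HasDerivAt (fun y => Real.sin y ^ (c+1))
          (((c:ℝ)+1) * Real.sin x ^ c * Real.cos x) x := by
        simpa using hs.fun_pow (c+1)
      have hp2 : HasDerivAt (fun y => Real.sin y ^ (c+2))
          (((c:ℝ)+2) * Real.sin x ^ (c+1) * Real.cos x) x := by
        simpa using hs.fun_pow (c+2)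
      have := (((hp1.fun_mul hc).fun_mul (hasDerivAt_id x)).const_mul (-((c:ℝ)+2))).fun_add hp2
      simp only [id_eq] at this
      convert this using 1
      have hcs : Real.cos x ^ 2 = 1 - Real.sin x ^ 2 := Real.cos_sq' x
      linear_combination (((c:ℝ)+2)*((c:ℝ)+1)* Real.sin x ^ c * x) * hcs
    · exact ((intI _ _).const_mul _).sub ((intI _ _).const_mul _)
  rw [intervalIntegral.integral_sub ((intI _ _).const_mul _) ((intI _ _).const_mul _),
      intervalIntegral.integral_const_mul, intervalIntegral.integral_const_mul] at key
  have e1 : Ii (c+2) 1 = ∫ x in (0:ℝ)..π, Real.sin x ^ (c+2) * x ^ 1 := rfl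
  have e2 : Ii c 1 = ∫ x in (0:ℝ)..π, Real.sin x ^ c * x ^ 1 := rfl
  rw [← e1, ← e2] at key
  linarith

lemma I1rec (d : ℕ) : Ii 1 (d+2) = π^(d+2) - ((d:ℝ)+2)*((d:ℝ)+1) * Ii 1 d := by
  have key : ∫ x in (0:ℝ)..π,
      ((Real.sin x ^ 1 * x ^ (d+2)) + ((d:ℝ)+2)*((d:ℝ)+1) * (Real.sin x ^ 1 * x ^ d))
      = π^(d+2) := by
    have h := intervalIntegral.integral_eq_sub_of_hasDerivAt
      (f := fun x => -(Real.cos x * x^(d+2)) + ((d:ℝ)+2) * (Real.sin x * x^(d+1)))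
      (f' := fun x => (Real.sin x ^ 1 * x ^ (d+2)) + ((d:ℝ)+2)*((d:ℝ)+1) * (Real.sin x ^ 1 * x ^ d))
      (a := 0) (b := π) ?_ ?_
    · rw [h]; simp [Real.sin_pi, Real.cos_pi]
    · intro x _
      have hs := Real.hasDerivAt_sin x
      have hc := Real.hasDerivAt_cos x
      have hx1 : HasDerivAt (fun y:ℝ => y^(d+2)) (((d:ℝ)+2) * x^(d+1)) x := by
        simpa using hasDerivAt_pow (d+2) x
      have hx2 : HasDerivAt (fun y:ℝ => y^(d+1)) (((d:ℝ)+1) * x^d) x := by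
        simpa using hasDerivAt_pow (d+1) x
      have := ((hc.fun_mul hx1).fun_neg).fun_add ((hs.fun_mul hx2).const_mul ((d:ℝ)+2))
      convert this using 1
      ring
    · exact (intI _ _).add ((intI _ _).const_mul _)
  rw [intervalIntegral.integral_add (intI _ _) ((intI _ _).const_mul _),
      intervalIntegral.integral_const_mul] at key
  have e1 : Ii 1 (d+2) = ∫ x in (0:ℝ)..π, Real.sin x ^ 1 * x ^ (d+2) := rfl
  have e2 : Ii 1 d = ∫ x in (0:ℝ)..π, Real.sin x ^ 1 * x ^ d := rfl
  rw [← e1, ← e2] at key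
  linarith

lemma I11 : Ii 1 1 = π := by
  have key : ∫ x in (0:ℝ)..π, (Real.sin x ^ 1 * x ^ 1) = π := by
    have h := intervalIntegral.integral_eq_sub_of_hasDerivAt
      (f := fun x => -(Real.cos x * x) + Real.sin x)
      (f' := fun x => Real.sin x ^ 1 * x ^ 1)
      (a := 0) (b := π) ?_ ?_
    · rw [h]; simp [Real.sin_pi, Real.cos_pi]
    · intro x _
      have := (((Real.hasDerivAt_cos x).fun_mul (hasDerivAt_id x)).fun_neg).fun_add (Real.hasDerivAt_sin x)
      simp only [id_eq] at this
      convert this using 1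
      ring
    · exact intI _ _
  exact key

lemma B_eq (n m : ℕ) (h1 : 1 ≤ m) (h2 : m ≤ n) :
    B n m = (1/(((m-1).factorial:ℝ) * ((n-m).factorial:ℝ))) * Ii (m-1) (n-m) := by
  rw [B, if_neg (by omega), if_neg (by omega)]; rfl

lemma B_zero (n : ℕ) : B n 0 = π^n / (n.factorial : ℝ) := by rw [B]; simp

lemma B_gt (n m : ℕ) (h : n < m) : B n m = 0 := by
  rw [B, if_neg (by omega), if_pos h]

lemma fact_cast (e : ℕ) : (((e+2).factorial : ℕ) : ℝ) = ((e:ℝ)+2)*((e:ℝ)+1)*(e.factorial : ℝ) := by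
  show (((e+2)*((e+1)*e.factorial) : ℕ) : ℝ) = _
  push_cast; ring

lemma fact_pos (e : ℕ) : (0:ℝ) < (e.factorial : ℝ) := by positivity

lemma alg (x y z E F a b : ℝ) (hE : E ≠ 0) (hF : F ≠ 0) (ha1 : a+1 ≠ 0) (ha2 : a+2 ≠ 0)
    (hb1 : b+1 ≠ 0) (hb2 : b+2 ≠ 0)
    (hr : (a+2)^2 * z = (a+2)*(a+1)*x - (b+2)*(b+1)*y) :
    1/(E*((b+2)*(b+1)*F)) * x - 1/(((a+2)*(a+1)*E)*F) * y
      = (a+2)^2 * (1/(((a+2)*(a+1)*E)*((b+2)*(b+1)*F)) * z) := by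
  have e1 : 1/(E*((b+2)*(b+1)*F)) * x - 1/(((a+2)*(a+1)*E)*F) * y
      = ((a+2)*(a+1)*x - (b+2)*(b+1)*y) * (1/(((a+2)*(a+1)*E)*((b+2)*(b+1)*F))) := by
    field_simp
  rw [e1, ← hr]; ring

lemma Brec (n m : ℕ) (hm : 2 ≤ m) (hmn : m ≤ n + 2) (hn : 1 ≤ n) :
    B n (m-2) - B n m = ((m:ℝ)-1)^2 * B (n+2) m := by
  rcases Nat.lt_or_ge m 3 with h3 | h3
  · -- m = 2
    obtain rfl : m = 2 := by omega
    have hB2 : B (n+2) 2 = (1/((Nat.factorial 1:ℝ) * (n.factorial:ℝ))) * Ii 1 n := by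
      have := B_eq (n+2) 2 (by omega) (by omega)
      rwa [show (2:ℕ)-1 = 1 from rfl, show n+2-2 = n by omega] at this
    rcases Nat.lt_or_ge n 2 with h2 | h2
    · obtain rfl : n = 1 := by omega
      rw [show (2:ℕ)-2 = 0 from rfl, B_zero, B_gt 1 2 (by omega), hB2]
      simp [I11, Nat.factorial]
      norm_num
    · obtain ⟨d, rfl⟩ : ∃ d, n = d + 2 := ⟨n-2, by omega⟩
      have hBn2 : B (d+2) 2 = (1/((Nat.factorial 1:ℝ) * (d.factorial:ℝ))) * Ii 1 d := by
        have := B_eq (d+2) 2 (by omega) (by omega)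
        rwa [show (2:ℕ)-1 = 1 from rfl, show d+2-2 = d by omega] at this
      rw [show (2:ℕ)-2 = 0 from rfl, B_zero, hBn2, hB2]
      have hr := I1rec d
      have hf := fact_cast d
      have h1 : (Nat.factorial 1 : ℝ) = 1 := by norm_num [Nat.factorial]
      rw [h1, hf]
      have hd := fact_pos d
      rw [hr]
      field_simp
      ring
  · -- m ≥ 3
    obtain ⟨e, rfl⟩ : ∃ e, m = e + 3 := ⟨m-3, by omega⟩
    have hm2 : B n (e+3-2) = (1/((e.factorial:ℝ) * ((n-e-1).factorial:ℝ))) * Ii e (n-e-1) := by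
      have := B_eq n (e+1) (by omega) (by omega)
      rw [show e+3-2 = e+1 by omega]
      rwa [show e+1-1 = e by omega, show n-(e+1) = n-e-1 by omega] at this
    have hB : B (n+2) (e+3)
        = (1/(((e+2).factorial:ℝ) * ((n-e-1).factorial:ℝ))) * Ii (e+2) (n-e-1) := by
      have := B_eq (n+2) (e+3) (by omega) (by omega)
      rwa [show e+3-1 = e+2 by omega, show n+2-(e+3) = n-e-1 by omega] at this
    have hcast : ((e:ℝ)+3-1)^2 = ((e:ℝ)+2)^2 := by push_cast; ring
    rcases Nat.lt_or_ge n (e+3) with hlt | hle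
    · -- m = n+1 or n+2, B n m = 0, b = n-e-1 ∈ {0,1}
      rw [hm2, B_gt n (e+3) hlt, hB]
      have hb : n-e-1 = 0 ∨ n-e-1 = 1 := by omega
      have hfc := fact_cast e
      have he := fact_pos e
      have hb2 := fact_pos (n-e-1)
      rcases hb with hb | hb <;> rw [hb] <;>
      · push_cast
        rw [hfc]
        field_simp
        first
        | nlinarith [Irec0 e, he]
        | nlinarith [Irec1 e, he]
    · -- m <= n : b = n-e-1 = f+2 with f = n-e-3
      obtain ⟨f, hf⟩ : ∃ f, n - e - 1 = f + 2 := ⟨n-e-3, by omega⟩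
      have hBnm : B n (e+3) = (1/(((e+2).factorial:ℝ) * (f.factorial:ℝ))) * Ii (e+2) f := by
        have := B_eq n (e+3) (by omega) (by omega)
        rwa [show e+3-1 = e+2 by omega, show n-(e+3) = f by omega] at this
      rw [hf] at hm2 hB
      have hfe := fact_cast e
      have hff := fact_cast f
      have hE : (e.factorial:ℝ) ≠ 0 := by positivity
      have hF : (f.factorial:ℝ) ≠ 0 := by positivity
      have h1 : ((e:ℝ)+1) ≠ 0 := by positivity
      have h2 : ((e:ℝ)+2) ≠ 0 := by positivity
      have h3' : ((f:ℝ)+1) ≠ 0 := by positivity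
      have h4 : ((f:ℝ)+2) ≠ 0 := by positivity
      rw [hm2, hBnm, hB, hfe, hff]
      push_cast
      linear_combination alg (Ii e (f+2)) (Ii (e+2) f) (Ii (e+2) (f+2))
        (e.factorial:ℝ) (f.factorial:ℝ) (e:ℝ) (f:ℝ) hE hF h1 h2 h3' h4 (Irec2 e f)

lemma Q_succ (m : ℕ) : Q (m+2) = Q m * (1 + Polynomial.C (((m+1 : ℕ) : ℝ)^2) * Polynomial.X^2) := by
  rw [Q, Q]
  have hset : (Finset.Icc 1 (m+2-1)).filter (fun j => j % 2 ≠ (m+2) % 2)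
      = insert (m+1) ((Finset.Icc 1 (m-1)).filter (fun j => j % 2 ≠ m % 2)) := by
    ext j
    simp only [Finset.mem_insert, Finset.mem_filter, Finset.mem_Icc]
    omega
  rw [hset, Finset.prod_insert (by simp only [Finset.mem_filter, Finset.mem_Icc]; omega)]
  ring

lemma A_zero (m : ℕ) : A m 0 = 1 := by
  rw [A, Polynomial.coeff_zero_eq_eval_zero, Q, Polynomial.eval_prod]
  simp

lemma Q_natDegree (m : ℕ) : (Q m).natDegree ≤ m := by
  induction m using Nat.strong_induction_on with
  | _ m ih =>
    match m with
    | 0 => simp [Q]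
    | 1 => simp [Q]
    | (p+2) =>
      rw [Q_succ]
      refine (Polynomial.natDegree_mul_le).trans ?_
      have h1 : (Q p).natDegree ≤ p := ih p (by omega)
      have h2 : (1 + Polynomial.C (((p+1:ℕ):ℝ)^2) * Polynomial.X^2).natDegree ≤ 2 := by
        refine (Polynomial.natDegree_add_le _ _).trans ?_
        simp only [Polynomial.natDegree_one]
        refine max_le (by omega) ?_
        refine (Polynomial.natDegree_C_mul_le _ _).trans ?_
        simp
      omega

lemma A_gt (m j : ℕ) (h : m < j) : A m j = 0 :=
  Polynomial.coeff_eq_zero_of_natDegree_lt (lt_of_le_of_lt (Q_natDegree m) h)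

lemma Arec (m j : ℕ) : A (m+2) (j+2) = A m (j+2) + ((m:ℝ)+1)^2 * A m j := by
  rw [A, A, A, Q_succ, mul_add, mul_one, Polynomial.coeff_add]
  congr 1
  rw [show Q m * (Polynomial.C (((m+1:ℕ):ℝ)^2) * Polynomial.X^2)
      = (Q m * Polynomial.C (((m+1:ℕ):ℝ)^2)) * Polynomial.X^2 by ring,
    Polynomial.coeff_mul_X_pow, Polynomial.coeff_mul_C]
  push_cast
  ring

lemma Ii_zero (b : ℕ) : Ii 0 b = π^(b+1)/((b:ℝ)+1) := by
  rw [Ii]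
  simp only [pow_zero, one_mul]
  rw [integral_pow]
  push_cast
  simp [zero_pow]

lemma B_one (m : ℕ) (h : 1 ≤ m) : B m 1 = π^m / (m.factorial : ℝ) := by
  obtain ⟨e, rfl⟩ : ∃ e, m = e + 1 := ⟨m-1, by omega⟩
  rw [B_eq (e+1) 1 (by omega) (by omega), show (1:ℕ)-1 = 0 from rfl,
    show e+1-1 = e by omega, Ii_zero]
  have hf : (((e+1).factorial : ℕ) : ℝ) = ((e:ℝ)+1) * (e.factorial : ℝ) := by
    show (((e+1)*e.factorial : ℕ) : ℝ) = _
    push_cast; ring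
  rw [hf, Nat.factorial_zero]
  have h1 : (e.factorial:ℝ) ≠ 0 := by positivity
  have h2 : ((e:ℝ)+1) ≠ 0 := by positivity
  field_simp
  ring

lemma key (j : ℕ) : ∀ n : ℕ, 2*j + 3 ≤ n →
    ∑ s ∈ Finset.range ((n - (2*j+2))/2 + 1),
        B n (n - 2*s) * ((n - 2*s - 1 : ℕ) : ℝ)^2 * A (n - 2*s - 2) (2*j)
      = π^(n - (2*j+2)) / ((n - (2*j+2)).factorial : ℝ) := by
  induction j with
  | zero =>
    intro n hn
    simp only [Nat.mul_zero, Nat.zero_add]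
    have hterm : ∀ s ∈ Finset.range ((n - 2)/2 + 1),
        B n (n - 2*s) * ((n - 2*s - 1 : ℕ) : ℝ)^2 * A (n - 2*s - 2) 0
          = B (n-2) (n - 2*(s+1)) - B (n-2) (n - 2*s) := by
      intro s hs
      simp only [Finset.mem_range] at hs
      have h2 : 2 ≤ n - 2*s := by omega
      have hb := Brec (n-2) (n-2*s) h2 (by omega) (by omega)
      rw [show n-2+2 = n by omega] at hb
      have hc : ((n - 2*s - 1 : ℕ) : ℝ) = ((n - 2*s : ℕ) : ℝ) - 1 := by
        have := Nat.cast_sub (R := ℝ) (show 1 ≤ n - 2*s by omega)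
        simpa using this
      rw [A_zero, mul_one, hc, show n-2*(s+1) = n-2*s-2 by omega]
      linear_combination -hb
    rw [Finset.sum_congr rfl hterm, Finset.sum_range_sub (fun s => B (n-2) (n - 2*s))]
    rw [show n - 2*0 = n by omega, B_gt (n-2) n (by omega), sub_zero]
    rcases Nat.even_or_odd n with he | ho
    · have h0 : n - 2*((n-2)/2+1) = 0 := by
        have := Nat.even_iff.mp he; omega
      rw [h0, B_zero]
    · have h1 : n - 2*((n-2)/2+1) = 1 := by
        have := Nat.odd_iff.mp ho; omega
      rw [h1, B_one (n-2) (by omega)]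
  | succ j ih =>
    intro n hn
    have hS : (n - (2*(j+1)+2))/2 = (n - 2 - (2*j+2))/2 := by omega
    set S := (n - (2*(j+1)+2))/2 with hSdef
    have hSle : 2*S ≤ n - (2*j+4) := by omega
    -- Step 1 : rewrite each term via Brec
    have hterm : ∀ s ∈ Finset.range (S + 1),
        B n (n - 2*s) * ((n - 2*s - 1 : ℕ) : ℝ)^2 * A (n - 2*s - 2) (2*(j+1))
          = (B (n-2) (n - 2*s - 2) - B (n-2) (n - 2*s)) * A (n - 2*s - 2) (2*j+2) := by
      intro s hs
      simp only [Finset.mem_range] at hs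
      have hm : 2*j + 4 ≤ n - 2*s := by omega
      have hb := Brec (n-2) (n-2*s) (by omega) (by omega) (by omega)
      rw [show n-2+2 = n by omega] at hb
      have hc : ((n - 2*s - 1 : ℕ) : ℝ) = ((n - 2*s : ℕ) : ℝ) - 1 := by
        have := Nat.cast_sub (R := ℝ) (show 1 ≤ n - 2*s by omega)
        simpa using this
      rw [show 2*(j+1) = 2*j+2 by omega, hc]
      linear_combination (-(A (n - 2*s - 2) (2*j+2))) * hb
    rw [Finset.sum_congr rfl hterm]
    simp only [sub_mul]
    rw [Finset.sum_sub_distrib]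
    -- Step 2 : shift the subtracted sum
    have hshift : ∑ s ∈ Finset.range (S+1), B (n-2) (n - 2*s) * A (n - 2*s - 2) (2*j+2)
        = ∑ s ∈ Finset.range (S+1), B (n-2) (n - 2*(s+1)) * A (n - 2*(s+1) - 2) (2*j+2) := by
      rw [Finset.sum_range_succ' (fun s => B (n-2) (n - 2*s) * A (n - 2*s - 2) (2*j+2)) S,
        Finset.sum_range_succ (fun s => B (n-2) (n - 2*(s+1)) * A (n - 2*(s+1) - 2) (2*j+2)) S]
      rw [show n - 2*0 = n by omega, B_gt (n-2) n (by omega), zero_mul, add_zero]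
      rw [A_gt (n - 2*(S+1) - 2) (2*j+2) (by omega), mul_zero, add_zero]
    rw [hshift, ← Finset.sum_sub_distrib]
    -- Step 3 : apply the A recurrence and match with ih
    have ihh := ih (n-2) (by omega)
    rw [hS, show n - (2*(j+1)+2) = n - 2 - (2*j+2) by omega, ← ihh]
    apply Finset.sum_congr rfl
    intro s hs
    simp only [Finset.mem_range] at hs
    have hm : 2*j + 4 ≤ n - 2*s := by omega
    have e1 : n - 2*(s+1) = n - 2*s - 2 := by omega
    have e2 : n - 2*s - 2 - 2 = n - 2*s - 4 := by omega
    have e3 : n - 2*s - 2 = (n - 2*s - 4) + 2 := by omega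
    rw [e1, e2]
    rw [e3, Arec (n - 2*s - 4) (2*j)]
    have e4 : n - 2 - 2*s = (n - 2*s - 4) + 2 := by omega
    rw [e4]
    rw [show n - 2*s - 4 + 2 - 2 = n - 2*s - 4 by omega]
    rw [show n - 2*s - 4 + 2 - 1 = n - 2*s - 4 + 1 by omega]
    push_cast
    ring

theorem basic_combinatorial_identity (n k : ℕ) (hk : Even k) (hk2 : 2 ≤ k)
    (hkn : k ≤ n - 1) (hn : 1 ≤ n) :
    ∑ s ∈ (Finset.range n).filter (fun s => k ≤ n - 2 * s),
        B n (n - 2 * s) * ((n - 2 * s - 1 : ℕ) : ℝ) ^ 2 * A (n - 2 * s - 2) (k - 2) =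
      π ^ (n - k) / ((n - k).factorial : ℝ) := by
  have hfilter : (Finset.range n).filter (fun s => k ≤ n - 2 * s)
      = Finset.range ((n - k)/2 + 1) := by
    ext s
    simp only [Finset.mem_filter, Finset.mem_range]
    omega
  obtain ⟨t, ht⟩ := hk
  rw [hfilter, show n - k = n - (2*(t-1)+2) by omega, show k - 2 = 2*(t-1) by omega]
  exact key (t-1) n (by omega)
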